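/- arXiv:2511.22728 — 3 statements merged into one kernel-verified Lean document; each statement's English description precedes it below -/
import Mathlib

section
/- Let P ∈ ℝ^{r×n}, Q ∈ ℝ^{(n-r)×n} satisfy PQᵀ = 0, QQᵀ = I, and let QAQᵀ be invertible with Π = Qᵀ(QAQᵀ)^{-1}Q. If the row space of C (i.e., range of Cᵀ) is contained in the range of Pᵀ, then CΠ = 0, and consequently the feedthrough matrix D̂ = −CΠB is zero. -/
open Matrix

/-- If `range(Cᵀ) ⊆ range(Pᵀ)`, with `P Qᵀ = 0`, `Q Qᵀ = I`, and `Q A Qᵀ`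
invertible, then `C Π = 0` and hence the feedthrough `D̂ = -C Π B` vanishes. -/
theorem feedthrough_zero_of_output_range (n r m p : ℕ) (hr : r ≤ n)
    (A : Matrix (Fin n) (Fin n) ℝ) (B : Matrix (Fin n) (Fin m) ℝ)
    (C : Matrix (Fin p) (Fin n) ℝ)
    (P : Matrix (Fin r) (Fin n) ℝ) (Q : Matrix (Fin (n - r)) (Fin n) ℝ)
    (hP : P * Pᵀ = 1) (hQ : Q * Qᵀ = 1) (hPQ : P * Qᵀ = 0)
    (hInv : IsUnit (Q * A * Qᵀ))
    (hrange : LinearMap.range Cᵀ.mulVecLin ≤ LinearMap.range Pᵀ.mulVecLin) :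
    C * (Qᵀ * (Q * A * Qᵀ)⁻¹ * Q) = 0 ∧
      -(C * (Qᵀ * (Q * A * Qᵀ)⁻¹ * Q) * B) = 0 := by
  have hQP : Q * Pᵀ = 0 := by
    have := congrArg Matrix.transpose hPQ
    simpa using this
  have hCQ : C * Qᵀ = 0 := by
    have hQC : Q * Cᵀ = 0 := by
      ext i j
      -- column j of Cᵀ is in range of Pᵀ.mulVecLin
      obtain ⟨v, hv⟩ := hrange ⟨Pi.single j 1, rfl⟩
      have hcol : Cᵀ.mulVec (Pi.single j 1) = Pᵀ.mulVec v := hv.symm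
      have : (Q * Cᵀ) i j = Q.mulVec (Cᵀ.mulVec (Pi.single j 1)) i := by
        simp [Matrix.mul_apply, Matrix.mulVec, dotProduct, Pi.single_apply,
          mul_ite, Finset.sum_ite_eq', mul_comm]
      rw [this, hcol, Matrix.mulVec_mulVec, hQP]
      simp
    have := congrArg Matrix.transpose hQC
    simpa using this
  have h1 : C * (Qᵀ * (Q * A * Qᵀ)⁻¹ * Q) = 0 := by
    calc C * (Qᵀ * (Q * A * Qᵀ)⁻¹ * Q) = (C * Qᵀ) * ((Q * A * Qᵀ)⁻¹ * Q) := by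
          simp only [Matrix.mul_assoc]
      _ = 0 := by rw [hCQ]; simp
  exact ⟨h1, by rw [h1]; simp⟩
end

section
/- Let A ∈ ℝ^{n×n} be Hurwitz, let X be the symmetric positive definite solution of AᵀX + XA = −I, and let X = LLᵀ be its Cholesky factorization with L invertible. Then the transformed matrix Ã = LᵀA L^{-ᵀ} is negative definite in the sense that vᵀÃv < 0 for all nonzero v ∈ ℝⁿ. -/
open Matrix

/-- `A` is Hurwitz: every eigenvalue (over `ℂ`) has strictly negative real part. -/
def IsHurwitz {m : Type*} [Fintype m] [DecidableEq m] (A : Matrix m m ℝ) : Prop :=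
  ∀ μ ∈ spectrum ℂ (A.map (algebraMap ℝ ℂ)), μ.re < 0

/-- If `X = L Lᵀ ≻ 0` solves `Aᵀ X + X A = -I` with `L` invertible, then
`Ã = Lᵀ A L⁻ᵀ` satisfies `vᵀ Ã v < 0` for all `v ≠ 0`. -/
theorem transformed_negdef (n : ℕ) (A X L : Matrix (Fin n) (Fin n) ℝ)
    (hA : IsHurwitz A) (hX : X.PosDef) (hLyap : Aᵀ * X + X * A = -1)
    (hL : IsUnit L) (hChol : X = L * Lᵀ) :
    ∀ v : Fin n → ℝ, v ≠ 0 → v ⬝ᵥ ((Lᵀ * A * (L⁻¹)ᵀ) *ᵥ v) < 0 := by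
  intro v hv
  have hLd : IsUnit L.det := (Matrix.isUnit_iff_isUnit_det L).mp hL
  have h1 : L⁻¹ * L = 1 := Matrix.nonsing_inv_mul L hLd
  have h2 : L * L⁻¹ = 1 := Matrix.mul_nonsing_inv L hLd
  have h1t : Lᵀ * (L⁻¹)ᵀ = 1 := by
    rw [← Matrix.transpose_mul, h1, Matrix.transpose_one]
  -- key matrix identity
  have key : (Lᵀ * A * (L⁻¹)ᵀ) + (L⁻¹ * Aᵀ * L) = -(L⁻¹ * (L⁻¹)ᵀ) := by
    have : L⁻¹ * (Aᵀ * X + X * A) * (L⁻¹)ᵀ = (L⁻¹ * Aᵀ * L) + (Lᵀ * A * (L⁻¹)ᵀ) := by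
      rw [hChol]
      calc L⁻¹ * (Aᵀ * (L * Lᵀ) + (L * Lᵀ) * A) * (L⁻¹)ᵀ
          = (L⁻¹ * Aᵀ * L) * (Lᵀ * (L⁻¹)ᵀ) + (L⁻¹ * L) * (Lᵀ * A * (L⁻¹)ᵀ) := by
            noncomm_ring
        _ = (L⁻¹ * Aᵀ * L) + (Lᵀ * A * (L⁻¹)ᵀ) := by rw [h1t, h1, Matrix.mul_one, Matrix.one_mul]
    rw [hLyap] at this
    rw [add_comm, ← this]
    noncomm_ring
  -- the transpose has the same quadratic form
  have hsym : v ⬝ᵥ ((L⁻¹ * Aᵀ * L) *ᵥ v) = v ⬝ᵥ ((Lᵀ * A * (L⁻¹)ᵀ) *ᵥ v) := by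
    have ht : (L⁻¹ * Aᵀ * L) = (Lᵀ * A * (L⁻¹)ᵀ)ᵀ := by
      simp [Matrix.transpose_mul, Matrix.mul_assoc]
    rw [ht, Matrix.mulVec_transpose, Matrix.dotProduct_mulVec, dotProduct_comm]
  -- positivity of v ⬝ᵥ (L⁻¹ (L⁻¹)ᵀ *ᵥ v)
  set w : Fin n → ℝ := (L⁻¹)ᵀ *ᵥ v with hw
  have hwv : v ⬝ᵥ ((L⁻¹ * (L⁻¹)ᵀ) *ᵥ v) = w ⬝ᵥ w := by
    rw [hw, ← Matrix.mulVec_mulVec, Matrix.dotProduct_mulVec, ← Matrix.mulVec_transpose]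
  have hwne : w ≠ 0 := by
    intro h0
    apply hv
    have : Lᵀ *ᵥ w = v := by
      rw [hw, Matrix.mulVec_mulVec, h1t, Matrix.one_mulVec]
    rw [h0, Matrix.mulVec_zero] at this
    exact this.symm
  have hpos : 0 < w ⬝ᵥ w := by
    rcases Function.ne_iff.mp hwne with ⟨i, hi⟩
    have : (0:ℝ) < w i * w i := mul_self_pos.mpr hi
    calc (0:ℝ) < w i * w i := this
      _ ≤ ∑ j, w j * w j := Finset.single_le_sum (fun j _ => mul_self_nonneg (w j)) (Finset.mem_univ i)
      _ = w ⬝ᵥ w := rfl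
  -- combine
  have h2q : v ⬝ᵥ ((Lᵀ * A * (L⁻¹)ᵀ) *ᵥ v) + v ⬝ᵥ ((L⁻¹ * Aᵀ * L) *ᵥ v)
      = -(w ⬝ᵥ w) := by
    rw [← dotProduct_add, ← Matrix.add_mulVec, key, Matrix.neg_mulVec,
      dotProduct_neg, hwv]
  rw [hsym] at h2q
  linarith
end

section
/- Let A ∈ ℝ^{n×n} have negative definite symmetric part, and let P, Q have orthonormal rows with PQᵀ = 0 and [P;Q] orthogonal. Then the singular perturbation reduced matrix Â := PAPᵀ − PAΠAPᵀ, where Π = Qᵀ(QAQᵀ)^{-1}Q, has negative definite symmetric part, and hence is Hurwitz. -/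
open Matrix

lemma negdef_quad_nonpos {m : Type*} [Fintype m] {M : Matrix m m ℝ}
    (h : ∀ v : m → ℝ, v ≠ 0 → v ⬝ᵥ (M *ᵥ v) < 0) (v : m → ℝ) : v ⬝ᵥ (M *ᵥ v) ≤ 0 := by
  by_cases hv : v = 0
  · simp [hv]
  · exact (h v hv).le

lemma dp_self_nonneg {m : Type*} [Fintype m] (v : m → ℝ) : 0 ≤ v ⬝ᵥ v :=
  Finset.sum_nonneg fun i _ => mul_self_nonneg (v i)

lemma dp_self_pos {m : Type*} [Fintype m] {v : m → ℝ} (hv : v ≠ 0) : 0 < v ⬝ᵥ v := by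
  rcases lt_or_eq_of_le (dp_self_nonneg v) with h | h
  · exact h
  · exact absurd (dotProduct_self_eq_zero.mp h.symm) hv

lemma negdef_hurwitz {m : Type*} [Fintype m] [DecidableEq m] {M : Matrix m m ℝ}
    (h : ∀ v : m → ℝ, v ≠ 0 → v ⬝ᵥ (M *ᵥ v) < 0) :
    ∀ μ ∈ spectrum ℂ (M.map (algebraMap ℝ ℂ)), μ.re < 0 := by
  intro μ hμ
  rw [spectrum.mem_iff] at hμ
  have hdet : (algebraMap ℂ (Matrix m m ℂ) μ - M.map (algebraMap ℝ ℂ)).det = 0 := by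
    by_contra hd
    exact hμ ((Matrix.isUnit_iff_isUnit_det _).2 (isUnit_iff_ne_zero.2 hd))
  obtain ⟨z, hz, hzMv⟩ := Matrix.exists_mulVec_eq_zero_iff.2 hdet
  have heig : (M.map (algebraMap ℝ ℂ)) *ᵥ z = μ • z := by
    rw [Matrix.sub_mulVec, sub_eq_zero] at hzMv
    rw [← hzMv, Algebra.algebraMap_eq_smul_one, Matrix.smul_mulVec, Matrix.one_mulVec]
  set x : m → ℝ := fun i => (z i).re with hx
  set y : m → ℝ := fun i => (z i).im with hy
  have hre : ((star z) ⬝ᵥ ((M.map (algebraMap ℝ ℂ)) *ᵥ z)).re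
      = x ⬝ᵥ (M *ᵥ x) + y ⬝ᵥ (M *ᵥ y) := by
    simp only [dotProduct, mulVec, Matrix.map_apply, Complex.re_sum,
      Pi.star_apply, Finset.mul_sum, ← Finset.sum_add_distrib]
    refine Finset.sum_congr rfl fun i _ => Finset.sum_congr rfl fun j _ => ?_
    simp only [Complex.mul_re, Complex.mul_im, RCLike.star_def, Complex.conj_re,
      Complex.conj_im, Complex.coe_algebraMap, Complex.ofReal_re, Complex.ofReal_im, hx, hy]
    ring
  have hs : ((star z) ⬝ᵥ z).re = x ⬝ᵥ x + y ⬝ᵥ y := by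
    simp only [dotProduct, Pi.star_apply, Complex.re_sum, ← Finset.sum_add_distrib]
    refine Finset.sum_congr rfl fun i _ => ?_
    simp only [Complex.mul_re, RCLike.star_def, Complex.conj_re, Complex.conj_im, hx, hy]
    ring
  have hsim : ((star z) ⬝ᵥ z).im = 0 := by
    simp only [dotProduct, Pi.star_apply, Complex.im_sum]
    refine Finset.sum_eq_zero fun i _ => ?_
    simp only [Complex.mul_im, RCLike.star_def, Complex.conj_re, Complex.conj_im]
    ring
  have hxy : x ≠ 0 ∨ y ≠ 0 := by
    by_contra hc
    push_neg at hc
    exact hz (funext fun i => Complex.ext (congrFun hc.1 i) (congrFun hc.2 i))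
  have hspos : 0 < x ⬝ᵥ x + y ⬝ᵥ y := by
    rcases hxy with h1 | h1
    · have := dp_self_nonneg y; have := dp_self_pos h1; linarith
    · have := dp_self_nonneg x; have := dp_self_pos h1; linarith
  have hq : x ⬝ᵥ (M *ᵥ x) + y ⬝ᵥ (M *ᵥ y) < 0 := by
    rcases hxy with h1 | h1
    · have := h x h1; have := negdef_quad_nonpos h y; linarith
    · have := h y h1; have := negdef_quad_nonpos h x; linarith
  have key : μ.re * (x ⬝ᵥ x + y ⬝ᵥ y) = x ⬝ᵥ (M *ᵥ x) + y ⬝ᵥ (M *ᵥ y) := by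
    rw [← hre, heig]
    have hmu : (star z) ⬝ᵥ (μ • z) = μ * ((star z) ⬝ᵥ z) := by
      rw [dotProduct_smul, smul_eq_mul]
    rw [hmu, Complex.mul_re, hsim, hs]
    ring
  nlinarith


lemma negdef_det_ne_zero {m : Type*} [Fintype m] [DecidableEq m] {M : Matrix m m ℝ}
    (h : ∀ v : m → ℝ, v ≠ 0 → v ⬝ᵥ (M *ᵥ v) < 0) : M.det ≠ 0 := by
  intro hd
  obtain ⟨v, hv, hMv⟩ := Matrix.exists_mulVec_eq_zero_iff.2 hd
  have := h v hv
  rw [hMv] at this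
  simp at this

lemma dot_mulVec_left {m k : Type*} [Fintype m] [Fintype k]
    (M : Matrix m k ℝ) (u : m → ℝ) (v : k → ℝ) :
    u ⬝ᵥ (M *ᵥ v) = (Mᵀ *ᵥ u) ⬝ᵥ v := by
  rw [dotProduct_mulVec, ← Matrix.mulVec_transpose]

lemma reduced_negdef (n r : ℕ) (hr : r ≤ n)
    (A : Matrix (Fin n) (Fin n) ℝ)
    (hneg : ∀ v : Fin n → ℝ, v ≠ 0 → v ⬝ᵥ (A *ᵥ v) < 0)
    (P : Matrix (Fin r) (Fin n) ℝ) (Q : Matrix (Fin (n - r)) (Fin n) ℝ)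
    (hP : P * Pᵀ = 1) (hQ : Q * Qᵀ = 1) (hPQ : P * Qᵀ = 0)
    (hres : Pᵀ * P + Qᵀ * Q = 1) :
    (∀ w : Fin r → ℝ, w ≠ 0 →
      w ⬝ᵥ ((P * A * Pᵀ - P * A * (Qᵀ * (Q * A * Qᵀ)⁻¹ * Q) * A * Pᵀ) *ᵥ w) < 0) := by
  set B := Q * A * Qᵀ with hB
  have hBneg : ∀ u : Fin (n - r) → ℝ, u ≠ 0 → u ⬝ᵥ (B *ᵥ u) < 0 := by
    intro u hu
    have hQu : Qᵀ *ᵥ u ≠ 0 := by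
      intro h0
      apply hu
      have : (Q * Qᵀ) *ᵥ u = Q *ᵥ (Qᵀ *ᵥ u) := (Matrix.mulVec_mulVec _ _ _).symm
      rw [hQ, Matrix.one_mulVec, h0, Matrix.mulVec_zero] at this
      exact this
    have h1 : u ⬝ᵥ (B *ᵥ u) = (Qᵀ *ᵥ u) ⬝ᵥ (A *ᵥ (Qᵀ *ᵥ u)) := by
      rw [hB, ← Matrix.mulVec_mulVec, ← Matrix.mulVec_mulVec, dot_mulVec_left Q u]
    rw [h1]
    exact hneg _ hQu
  have hdetB : IsUnit B.det := isUnit_iff_ne_zero.2 (negdef_det_ne_zero hBneg)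
  have hBBinv : B * B⁻¹ = 1 := Matrix.mul_nonsing_inv B hdetB
  set Pi := Qᵀ * B⁻¹ * Q with hPi
  set C := Pi * A * Pᵀ with hC
  set D := Pᵀ - C with hD
  have hPPi : P * Pi = 0 := by
    rw [hPi, ← Matrix.mul_assoc, ← Matrix.mul_assoc, hPQ, Matrix.zero_mul, Matrix.zero_mul]
  have hPD : P * D = 1 := by
    rw [hD, Matrix.mul_sub, hP, hC, ← Matrix.mul_assoc, ← Matrix.mul_assoc, hPPi]
    simp
  have hPiAPi : Piᵀ * A * Pi = Piᵀ := by
    have h1 : Q * (A * (Qᵀ * (B⁻¹ * Q))) = Q := by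
      calc Q * (A * (Qᵀ * (B⁻¹ * Q))) = Q * A * Qᵀ * B⁻¹ * Q := by
            simp only [Matrix.mul_assoc]
        _ = Q := by rw [← hB, hBBinv, Matrix.one_mul]
    simp only [hPi, Matrix.transpose_mul, Matrix.transpose_transpose, Matrix.mul_assoc, h1]
  have hred : Dᵀ * A * D = P * A * Pᵀ - P * A * Pi * A * Pᵀ := by
    have hCt : Cᵀ = P * Aᵀ * Piᵀ := by
      rw [hC]; simp [Matrix.transpose_mul, Matrix.mul_assoc]
    have hCAC : Cᵀ * A * C = Cᵀ * A * Pᵀ := by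
      rw [hCt, hC]
      calc P * Aᵀ * Piᵀ * A * (Pi * A * Pᵀ)
          = P * Aᵀ * (Piᵀ * A * Pi) * (A * Pᵀ) := by simp only [Matrix.mul_assoc]
        _ = P * Aᵀ * Piᵀ * A * Pᵀ := by rw [hPiAPi]; simp only [Matrix.mul_assoc]
    have hPAC : P * A * C = P * A * Pi * A * Pᵀ := by
      rw [hC]; simp only [Matrix.mul_assoc]
    rw [hD]
    simp only [Matrix.transpose_sub, Matrix.sub_mul, Matrix.mul_sub,
      Matrix.transpose_transpose]
    rw [hCAC, hPAC]
    abel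
  intro w hw
  have hDw : D *ᵥ w ≠ 0 := by
    intro h0
    apply hw
    have : (P * D) *ᵥ w = P *ᵥ (D *ᵥ w) := (Matrix.mulVec_mulVec _ _ _).symm
    rw [hPD, Matrix.one_mulVec, h0, Matrix.mulVec_zero] at this
    exact this
  have hquad : w ⬝ᵥ ((Dᵀ * A * D) *ᵥ w) = (D *ᵥ w) ⬝ᵥ (A *ᵥ (D *ᵥ w)) := by
    rw [← Matrix.mulVec_mulVec, ← Matrix.mulVec_mulVec, dot_mulVec_left Dᵀ,
      Matrix.transpose_transpose]
  rw [show P * A * Pᵀ - P * A * (Qᵀ * (Q * A * Qᵀ)⁻¹ * Q) * A * Pᵀ = Dᵀ * A * D from by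
    rw [hred, hPi, hB]]
  rw [hquad]
  exact hneg _ hDw

/-- If `A` has negative definite symmetric part, the singular-perturbation reduced
matrix `Â = P A Pᵀ - P A Π A Pᵀ`, with `Π = Qᵀ (Q A Qᵀ)⁻¹ Q`, also has negative
definite symmetric part, hence is Hurwitz. -/
theorem reduced_matrix_hurwitz (n r : ℕ) (hr : r ≤ n)
    (A : Matrix (Fin n) (Fin n) ℝ)
    (hneg : ∀ v : Fin n → ℝ, v ≠ 0 → v ⬝ᵥ (A *ᵥ v) < 0)
    (P : Matrix (Fin r) (Fin n) ℝ) (Q : Matrix (Fin (n - r)) (Fin n) ℝ)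
    (hP : P * Pᵀ = 1) (hQ : Q * Qᵀ = 1) (hPQ : P * Qᵀ = 0)
    (hres : Pᵀ * P + Qᵀ * Q = 1) :
    (∀ w : Fin r → ℝ, w ≠ 0 →
      w ⬝ᵥ ((P * A * Pᵀ - P * A * (Qᵀ * (Q * A * Qᵀ)⁻¹ * Q) * A * Pᵀ) *ᵥ w) < 0) ∧
    IsHurwitz (P * A * Pᵀ - P * A * (Qᵀ * (Q * A * Qᵀ)⁻¹ * Q) * A * Pᵀ) := by
  refine ⟨reduced_negdef n r hr A hneg P Q hP hQ hPQ hres, ?_⟩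
  exact negdef_hurwitz (reduced_negdef n r hr A hneg P Q hP hQ hPQ hres)
end
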